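/- For every integer n ≥ 1, every sequence of coefficients c : ℕ → ℂ, and every real R > 1/|f|: -(2πi)^{-1} ∮_{|t|=R} (-Log(1 + 1/(f t)))·( c_0/(t(f t+1)) + Σ_{b=1}^{n} c_b·(φ_{b-1})'(t) ) dt = c_1/(f(f+1)), where (φ_{b-1})' is the formal derivative of the polynomial φ_{b-1} evaluated at t. That is, the sum of residues Σ_{b=0}^{n} c_b · Res_{t=∞}(φ_{-1} dφ_{b-1}) collapses onto the b = 1 term and equals c_1/(f(f+1)). -/

import Mathlib

open Polynomial Metric

private lemma circleIntegrable_sub' {g h : ℂ → ℂ} {c : ℂ} {R : ℝ}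
    (hg : CircleIntegrable g c R) (hh : CircleIntegrable h c R) :
    CircleIntegrable (fun z => g z - h z) c R :=
  IntervalIntegrable.sub hg hh

/-- For `n ≥ 1`, coefficients `c : ℕ → ℂ`, and `R > 1/|f|`:
`-(2πi)⁻¹ ∮_{|t|=R} (-Log(1 + 1/(ft)))·(c_0/(t(ft+1)) + Σ_{b=1}^n c_b φ_{b-1}'(t)) dt
 = c_1/(f(f+1))`, i.e. the sum of residues `Σ_{b=0}^n c_b Res_{t=∞}(φ_{-1} dφ_{b-1})`
collapses onto the `b = 1` term. -/
theorem residue_sum_collapses (f : ℂ) (hf : f ≠ 0) (hf1 : f ≠ -1)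
    (D : Polynomial ℂ → Polynomial ℂ)
    (hD : ∀ p, D p = C ((f + 1)⁻¹) * (X * (X - 1) * (C f * X + 1)) * p.derivative)
    (φ : ℕ → Polynomial ℂ)
    (hφ0 : φ 0 = C ((f + 1)⁻¹) * (X - 1))
    (hφ : ∀ b, φ (b + 1) = D (φ b)) :
    ∀ n : ℕ, 1 ≤ n → ∀ c : ℕ → ℂ, ∀ R : ℝ, 1 / ‖f‖ < R →
      -(2 * Real.pi * Complex.I)⁻¹ *
        (∮ t in C(0, R), (-Complex.log (1 + 1 / (f * t))) *
          (c 0 * (t * (f * t + 1))⁻¹ +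
            ∑ b ∈ Finset.Icc 1 n, c b * ((φ (b - 1)).derivative.eval t))) =
      c 1 / (f * (f + 1)) := by
  intro n hn c R hR
  have hfa : (0:ℝ) < ‖f‖ := norm_pos_iff.mpr hf
  have hR0 : (0:ℝ) < R := lt_trans (by positivity) hR
  have hRf : 1 < R * ‖f‖ := (div_lt_iff₀ hfa).mp hR
  have hf1' : f + 1 ≠ 0 := fun h => hf1 (by linear_combination h)
  -- basic facts on the sphere
  have habs : ∀ t ∈ sphere (0:ℂ) R, ‖t‖ = R := fun t ht => by simpa using ht
  have ht0 : ∀ t ∈ sphere (0:ℂ) R, t ≠ 0 := by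
    intro t ht h
    rw [h] at ht
    have := habs 0 ht
    simp at this
    exact hR0.ne this
  have hft : ∀ t ∈ sphere (0:ℂ) R, f * t + 1 ≠ 0 := by
    intro t ht h
    have h2 : f * t = -1 := by linear_combination h
    have := congrArg (‖·‖) h2
    simp [habs t ht] at this
    rw [mul_comm] at this
    rw [this] at hRf
    exact lt_irrefl _ hRf
  have hslit : ∀ t ∈ sphere (0:ℂ) R, 1 + 1 / (f * t) ∈ Complex.slitPlane := by
    intro t ht
    rw [Complex.mem_slitPlane_iff]
    left
    have h1 : ‖1 / (f * t)‖ < 1 := by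
      rw [norm_div, norm_mul, habs t ht]
      simp only [norm_one]
      rw [div_lt_one (by positivity)]
      linarith [hRf]
    have h2 := abs_le.mp (Complex.abs_re_le_norm (1 / (f * t)))
    simp only [Complex.add_re, Complex.one_re]
    linarith [h2.1]
  -- derivative of the log factor
  have hLd : ∀ t ∈ sphere (0:ℂ) R, HasDerivAt (fun t => -Complex.log (1 + 1 / (f * t)))
      ((t * (f * t + 1))⁻¹) t := by
    intro t ht
    have h0 := ht0 t ht
    have hft' := hft t ht
    have hft0 : f * t ≠ 0 := mul_ne_zero hf h0
    have h1 : HasDerivAt (fun t : ℂ => f * t) f t := by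
      simpa using (hasDerivAt_id t).const_mul f
    have h2 : HasDerivAt (fun t : ℂ => (f * t)⁻¹) (-f / (f * t) ^ 2) t := h1.inv hft0
    have h3 : HasDerivAt (fun t : ℂ => 1 + 1 / (f * t)) (-f / (f * t) ^ 2) t := by
      simpa [one_div] using h2.const_add 1
    have h4 := ((Complex.hasDerivAt_log (hslit t ht)).comp t h3).neg
    refine h4.congr_deriv ?_
    have hne : 1 + 1 / (f * t) ≠ 0 := by
      rw [show 1 + 1 / (f * t) = (f * t + 1) / (f * t) by field_simp]
      exact div_ne_zero hft' hft0
    field_simp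
  -- the polynomial collecting the terms b ≥ 2
  set P : Polynomial ℂ :=
    ∑ b ∈ Finset.Icc 2 n, Polynomial.C (c b) * (C ((f + 1)⁻¹) * (X - 1) * (φ (b - 2)).derivative)
    with hPdef
  -- the exact part
  set G : ℂ → ℂ := fun t =>
    c 0 * (-Complex.log (1 + 1 / (f * t)) * (t * (f * t + 1))⁻¹) +
      ∑ b ∈ Finset.Icc 1 n, c b * ((t * (f * t + 1))⁻¹ * (φ (b - 1)).eval t +
        -Complex.log (1 + 1 / (f * t)) * (φ (b - 1)).derivative.eval t) with hGdef
  -- the singular part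
  set A : ℂ → ℂ := fun t =>
    (c 1 * ((f + 1)⁻¹ * ((1 + f) / f))) • (t - (-f⁻¹))⁻¹ - (c 1 * (f + 1)⁻¹) • (t - 0)⁻¹
    with hAdef
  -- ∮ G = 0
  have hG0 : (∮ t in C(0, R), G t) = 0 := by
    apply circleIntegral.integral_eq_zero_of_hasDerivWithinAt hR0.le (f := fun t =>
      c 0 * ((-Complex.log (1 + 1 / (f * t))) ^ 2 / 2) +
      ∑ b ∈ Finset.Icc 1 n, c b * (-Complex.log (1 + 1 / (f * t)) * (φ (b - 1)).eval t))
    intro z hz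
    refine HasDerivAt.hasDerivWithinAt ?_
    have hL := hLd z hz
    have h1 : HasDerivAt (fun t : ℂ => (-Complex.log (1 + 1 / (f * t))) ^ 2 / 2)
        (-Complex.log (1 + 1 / (f * z)) * (z * (f * z + 1))⁻¹) z := by
      have := (hL.fun_pow 2).div_const 2
      refine this.congr_deriv ?_
      push_cast
      ring
    have h2 : ∀ b ∈ Finset.Icc 1 n,
        HasDerivAt (fun t => c b * (-Complex.log (1 + 1 / (f * t)) * (φ (b - 1)).eval t))
          (c b * ((z * (f * z + 1))⁻¹ * (φ (b - 1)).eval z +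
            -Complex.log (1 + 1 / (f * z)) * (φ (b - 1)).derivative.eval z)) z :=
      fun b _ => (hL.mul ((φ (b - 1)).hasDerivAt z)).const_mul (c b)
    exact (h1.const_mul (c 0)).add (HasDerivAt.fun_sum h2)
  -- continuity / integrability
  have hLc : ContinuousOn (fun t => -Complex.log (1 + 1 / (f * t))) (sphere (0:ℂ) R) :=
    fun t ht => ((hLd t ht).continuousAt).continuousWithinAt
  have hvc : ContinuousOn (fun t : ℂ => (t * (f * t + 1))⁻¹) (sphere (0:ℂ) R) := by
    apply ContinuousOn.inv₀
    · fun_prop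
    · intro t ht; exact mul_ne_zero (ht0 t ht) (hft t ht)
  have hGc : CircleIntegrable G 0 R := by
    refine ContinuousOn.circleIntegrable hR0.le ?_
    rw [hGdef]
    exact (continuousOn_const.mul (hLc.mul hvc)).add
      (continuousOn_finset_sum _ fun b _ => continuousOn_const.mul
        ((hvc.mul (Polynomial.continuous _).continuousOn).add
          (hLc.mul (Polynomial.continuous _).continuousOn)))
  have hinv1 : ContinuousOn (fun t : ℂ => (t - 0)⁻¹) (sphere (0:ℂ) R) := by
    apply ContinuousOn.inv₀ (by fun_prop)
    intro t ht
    rw [sub_zero]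
    exact ht0 t ht
  have hinv2 : ContinuousOn (fun t : ℂ => (t - (-f⁻¹))⁻¹) (sphere (0:ℂ) R) := by
    apply ContinuousOn.inv₀ (by fun_prop)
    intro t ht
    refine sub_ne_zero.mpr fun h => ?_
    have h2 := habs t ht
    rw [h] at h2
    simp only [norm_neg, norm_inv] at h2
    have h3 : R * ‖f‖ = 1 := by
      rw [← h2]; field_simp
    rw [h3] at hRf
    exact lt_irrefl _ hRf
  have hAc : CircleIntegrable A 0 R := by
    refine ContinuousOn.circleIntegrable hR0.le ?_
    rw [hAdef]
    exact (continuousOn_const.fun_smul hinv2).sub (continuousOn_const.fun_smul hinv1)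
  -- value of ∮ A
  have hA1 : (∮ t in C(0, R), (t - (0:ℂ))⁻¹) = 2 * Real.pi * Complex.I :=
    circleIntegral.integral_sub_inv_of_mem_ball (by simpa using hR0)
  have hA2 : (∮ t in C(0, R), (t - (-f⁻¹))⁻¹) = 2 * Real.pi * Complex.I := by
    refine circleIntegral.integral_sub_inv_of_mem_ball ?_
    rw [mem_ball_zero_iff]
    simpa [one_div] using hR
  have hAval : (∮ t in C(0, R), A t) =
      (c 1 * ((f + 1)⁻¹ * ((1 + f) / f))) * (2 * Real.pi * Complex.I) -
        (c 1 * (f + 1)⁻¹) * (2 * Real.pi * Complex.I) := by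
    rw [hAdef]
    rw [circleIntegral.integral_sub
      (ContinuousOn.circleIntegrable hR0.le (continuousOn_const.fun_smul hinv2))
      (ContinuousOn.circleIntegrable hR0.le (continuousOn_const.fun_smul hinv1)),
      circleIntegral.integral_smul, circleIntegral.integral_smul, hA1, hA2, smul_eq_mul,
      smul_eq_mul]
  -- ∮ of the polynomial part is 0
  have hPval : (∮ t in C(0, R), P.eval t) = 0 :=
    Complex.circleIntegral_eq_zero_of_differentiable_on_off_countable hR0.le
      Set.countable_empty (P.continuous.continuousOn) (fun z _ => P.differentiableAt)
  have hPc : CircleIntegrable (fun t => P.eval t) 0 R :=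
    ContinuousOn.circleIntegrable hR0.le (P.continuous.continuousOn)
  -- split the index set
  have h1mem : (1:ℕ) ∉ Finset.Icc 2 n := by simp
  have hsplit : Finset.Icc 1 n = insert 1 (Finset.Icc 2 n) := by
    ext x
    simp only [Finset.mem_Icc, Finset.mem_insert]
    omega
  -- the pointwise identity on the sphere
  have hEqOn : Set.EqOn
      (fun t => -Complex.log (1 + 1 / (f * t)) *
        (c 0 * (t * (f * t + 1))⁻¹ +
          ∑ b ∈ Finset.Icc 1 n, c b * (φ (b - 1)).derivative.eval t))
      (fun t => G t - A t - P.eval t) (sphere (0:ℂ) R) := by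
    intro t ht
    have h0 := ht0 t ht
    have hft' := hft t ht
    simp only []
    have key1 : G t - (∑ b ∈ Finset.Icc 1 n, c b * ((t * (f * t + 1))⁻¹ * (φ (b - 1)).eval t)) =
        -Complex.log (1 + 1 / (f * t)) *
          (c 0 * (t * (f * t + 1))⁻¹ +
            ∑ b ∈ Finset.Icc 1 n, c b * (φ (b - 1)).derivative.eval t) := by
      rw [hGdef]
      simp only [mul_add, Finset.mul_sum]
      rw [add_sub_assoc, ← Finset.sum_sub_distrib]
      congr 1
      · ring
      · exact Finset.sum_congr rfl fun b _ => by ring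
    have key2 : (∑ b ∈ Finset.Icc 1 n, c b * ((t * (f * t + 1))⁻¹ * (φ (b - 1)).eval t)) =
        A t + P.eval t := by
      rw [hsplit, Finset.sum_insert h1mem]
      have hb1 : c 1 * ((t * (f * t + 1))⁻¹ * (φ (1 - 1)).eval t) = A t := by
        rw [hAdef]
        simp only [Nat.sub_self, hφ0, eval_mul, eval_C, eval_sub, eval_X, eval_one, smul_eq_mul,
          sub_zero]
        have hrw2 : t - -f⁻¹ = (f * t + 1) / f := by
          field_simp
          ring
        rw [hrw2, inv_div]
        field_simp
        have h' : (1 + t * f) ≠ 0 := fun h => hft' (by linear_combination h)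
        ring_nf
        field_simp
        ring
      have hb2 : ∀ b ∈ Finset.Icc 2 n,
          c b * ((t * (f * t + 1))⁻¹ * (φ (b - 1)).eval t) =
            c b * ((C ((f + 1)⁻¹) * (X - 1) * (φ (b - 2)).derivative).eval t) := by
        intro b hb
        have hb' : 2 ≤ b := (Finset.mem_Icc.mp hb).1
        have hrw : b - 1 = (b - 2) + 1 := by omega
        rw [hrw, hφ, hD]
        simp only [eval_mul, eval_C, eval_sub, eval_X, eval_one, eval_add, eval_mul]
        field_simp
        have h' : (1 + t * f) ≠ 0 := fun h => hft' (by linear_combination h)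
        ring_nf
        field_simp
        ring
      rw [hb1, Finset.sum_congr rfl hb2, hPdef]
      simp only [eval_finset_sum, eval_mul, eval_C]
    rw [← key1, key2]
    ring
  -- assemble
  rw [circleIntegral.integral_congr hR0.le hEqOn]
  have : (∮ t in C(0, R), (G t - A t - P.eval t)) =
      ((∮ t in C(0, R), G t) - ∮ t in C(0, R), A t) - ∮ t in C(0, R), P.eval t := by
    rw [show (fun t => G t - A t - P.eval t) = fun t => (fun s => G s - A s) t - P.eval t from rfl,
      circleIntegral.integral_sub (circleIntegrable_sub' hGc hAc) hPc,
      circleIntegral.integral_sub hGc hAc]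
  rw [this, hG0, hAval, hPval]
  have hπ : (2 * (Real.pi:ℂ) * Complex.I) ≠ 0 := by
    simp [Real.pi_ne_zero, Complex.I_ne_zero, Complex.ofReal_ne_zero]
  field_simp
  ring
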